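/- For every s ≠ 0 and every ξ ∈ V: σ(Bˢξ, (d/ds)Bˢξ) = (1/s²) · g(Pξ, Pξ), where (d/ds)Bˢ = −(1/s²) J⁻¹P; in particular this quantity is nonnegative. -/

import Mathlib

open scoped RealInnerProductSpace

noncomputable section

/-- for `Bˢ = id + ((1−s)/s) J⁻¹P`, one has `(d/ds)Bˢ = −(1/s²)J⁻¹P` and
`σ(Bˢξ, (d/ds)Bˢξ) = (1/s²) g(Pξ, Pξ) ≥ 0`, where `σ(x,y) = g(Jx,y)`. -/
theorem statement14 (V : Type*) [NormedAddCommGroup V] [InnerProductSpace ℝ V]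
    [FiniteDimensional ℝ V]
    (J : V ≃ₗ[ℝ] V) (hJ : ∀ x y : V, ⟪J x, y⟫ = -⟪x, J y⟫)
    (P : V →ₗ[ℝ] V) (hP2 : P ∘ₗ P = P) (hPsa : ∀ x y : V, ⟪P x, y⟫ = ⟪x, P y⟫)
    (B : ℝ → V →ₗ[ℝ] V)
    (hB : ∀ s : ℝ, B s = LinearMap.id + ((1 - s) / s) • ((J.symm : V →ₗ[ℝ] V) ∘ₗ P))
    (s : ℝ) (hs : s ≠ 0) (ξ : V) :
    HasDerivAt (fun r => B r ξ) ((-(1 / s ^ 2)) • J.symm (P ξ)) s ∧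
    ⟪J (B s ξ), (-(1 / s ^ 2)) • J.symm (P ξ)⟫ = 1 / s ^ 2 * ⟪P ξ, P ξ⟫ ∧
    0 ≤ ⟪J (B s ξ), (-(1 / s ^ 2)) • J.symm (P ξ)⟫ := by
  have hfun : ∀ r : ℝ, B r ξ = ξ + ((1 - r) / r) • J.symm (P ξ) := by
    intro r; rw [hB r]; simp
  have hderiv : HasDerivAt (fun r => B r ξ) ((-(1 / s ^ 2)) • J.symm (P ξ)) s := by
    have h1 : HasDerivAt (fun r : ℝ => (1 - r) / r) (-(1 / s ^ 2)) s := by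
      have : HasDerivAt (fun r : ℝ => (1 - r) / r) ((-1 * s - (1 - s) * 1) / s ^ 2) s :=
        (HasDerivAt.div ((hasDerivAt_id s).const_sub 1) (hasDerivAt_id s) hs)
      convert this using 1
      field_simp
      ring
    have h2 := (h1.smul_const (J.symm (P ξ))).const_add ξ
    refine HasDerivAt.congr_of_eventuallyEq h2 ?_
    filter_upwards with r
    rw [hfun r]
  have heq : ⟪J (B s ξ), (-(1 / s ^ 2)) • J.symm (P ξ)⟫ = 1 / s ^ 2 * ⟪P ξ, P ξ⟫ := by
    have hJsymm : ∀ x y : V, ⟪J.symm x, y⟫ = -⟪x, J.symm y⟫ := by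
      intro x y
      have h := hJ (J.symm x) (J.symm y)
      simp only [LinearEquiv.apply_symm_apply] at h
      linarith
    have hskew0 : ⟪P ξ, J.symm (P ξ)⟫ = 0 := by
      have h := hJsymm (P ξ) (P ξ)
      have h2 : ⟪P ξ, J.symm (P ξ)⟫ = ⟪J.symm (P ξ), P ξ⟫ := real_inner_comm _ _
      linarith [h, h2]
    have hJx : ⟪J ξ, J.symm (P ξ)⟫ = -⟪P ξ, P ξ⟫ := by
      have := hJ ξ (J.symm (P ξ))
      rw [this]
      simp only [LinearEquiv.apply_symm_apply]
      have hPP : ⟪ξ, P ξ⟫ = ⟪P ξ, P ξ⟫ := by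
        have : ⟪P ξ, P ξ⟫ = ⟪ξ, P (P ξ)⟫ := hPsa _ _
        have hP : P (P ξ) = P ξ := by
          have := congrArg (fun f => f ξ) hP2; simpa using this
        rw [hP] at this
        linarith [this]
      rw [hPP]
    rw [hfun s]
    simp only [map_add, map_smul, LinearEquiv.apply_symm_apply, inner_add_left,
      inner_smul_left, inner_smul_right, real_inner_smul_left]
    rw [hJx, hskew0]
    ring
  refine ⟨hderiv, heq, ?_⟩
  rw [heq]
  have := real_inner_self_nonneg (x := P ξ)
  positivity
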